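/- The strange root function is monotone: for positive integers n₁ ≤ n₂, one has sr(n₁) ≤ sr(n₂). -/

import Mathlib

/-- The next value in the strange-root process: the least integer `z` with
`(i+1)*z > i*(y+1)`. -/
def srStep (i y : ℕ) : ℕ := i * (y + 1) / (i + 1) + 1

/-- `srY n i` is the second coordinate `y_i` of the `i`-th pair of the
strange-root process started at `⟨1, n⟩` (indices start at 1). -/
def srY (n : ℕ) : ℕ → ℕ
  | 0 => n
  | 1 => n
  | (i+2) => srStep (i+1) (srY n (i+1))

/-- The strange root of `n`: the first index `r ≥ 1` with `y_r ≤ r`. -/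
noncomputable def sr (n : ℕ) : ℕ := sInf {r | 1 ≤ r ∧ srY n r ≤ r}

lemma srStep_mono (i : ℕ) {y z : ℕ} (h : y ≤ z) : srStep i y ≤ srStep i z := by
  unfold srStep
  exact Nat.add_le_add_right (Nat.div_le_div_right (Nat.mul_le_mul_left _ (by omega))) 1

lemma srStep_le_of_lt {i y : ℕ} (h : i < y) : srStep i y ≤ y := by
  unfold srStep
  have : i * (y + 1) / (i + 1) < y := by
    rw [Nat.div_lt_iff_lt_mul (Nat.succ_pos i)]
    nlinarith
  omega

lemma srStep_le_of_le {i y : ℕ} (h : y ≤ i) : srStep i y ≤ i + 1 := by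
  unfold srStep
  have : i * (y + 1) / (i + 1) ≤ (i + 1) * i / (i + 1) :=
    Nat.div_le_div_right (by nlinarith)
  rw [Nat.mul_div_cancel_left _ (Nat.succ_pos i)] at this
  omega

lemma srY_le_max (n i : ℕ) : srY n i ≤ max n i := by
  induction i with
  | zero => simp [srY]
  | succ j ih =>
    match j, ih with
    | 0, _ => simp [srY]
    | (k+1), ih =>
      show srStep (k+1) (srY n (k+1)) ≤ max n (k+2)
      rcases le_or_gt (srY n (k+1)) (k+1) with hle | hlt
      · exact le_trans (srStep_le_of_le hle) (le_max_right _ _)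
      · exact le_trans (srStep_le_of_lt hlt)
          (le_trans ih (max_le_max le_rfl (by omega)))

lemma srY_mono {n₁ n₂ : ℕ} (h : n₁ ≤ n₂) (i : ℕ) : srY n₁ i ≤ srY n₂ i := by
  induction i with
  | zero => simpa [srY]
  | succ j ih =>
    match j, ih with
    | 0, _ => simpa [srY]
    | (k+1), ih => exact srStep_mono _ ih

/-- Monotonicity of the strange root: `n₁ ≤ n₂ → sr n₁ ≤ sr n₂`. -/
theorem sr_monotone (n₁ n₂ : ℕ) (h₁ : 1 ≤ n₁) (h : n₁ ≤ n₂) :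
    sr n₁ ≤ sr n₂ := by
  have hne : {r | 1 ≤ r ∧ srY n₂ r ≤ r}.Nonempty :=
    ⟨n₂, by omega, le_trans (srY_le_max n₂ n₂) (by simp)⟩
  have hmem := Nat.sInf_mem hne
  exact Nat.sInf_le ⟨hmem.1, le_trans (srY_mono h _) hmem.2⟩
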